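/- Let T > 0, ω > 0, A ≥ 0 and γ > 0 satisfy 2γ > ω. Let g : ℝ → ℝ be continuous and nonnegative on [0,T] and suppose that g(t) ≤ ω·(∫_t^T g(τ) dτ + A·exp(−2γt)) for every t ∈ [0,T]. Then for every t ∈ [0,T] one has ∫_t^T g(τ) dτ ≤ (ωA/(2γ − ω))·exp(−2γt), and consequently g(t) ≤ (2γωA/(2γ − ω))·exp(−2γt). -/

import Mathlib

open MeasureTheory intervalIntegral Real

/-- Backward-in-time Grönwall lemma: the exponential decay rate `2γ` of the forcing
propagates to `g` provided `2γ` exceeds the Grönwall constant `ω`. -/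
theorem backward_gronwall
    (T ω A γ : ℝ) (hT : 0 < T) (hω : 0 < ω) (hA : 0 ≤ A) (hγ : 0 < γ)
    (hωγ : ω < 2 * γ)
    (g : ℝ → ℝ) (hgc : ContinuousOn g (Set.Icc 0 T))
    (hgnn : ∀ t ∈ Set.Icc (0 : ℝ) T, 0 ≤ g t)
    (hineq : ∀ t ∈ Set.Icc (0 : ℝ) T,
      g t ≤ ω * ((∫ τ in t..T, g τ) + A * Real.exp (-(2 * γ) * t))) :
    ∀ t ∈ Set.Icc (0 : ℝ) T,
      (∫ τ in t..T, g τ) ≤ (ω * A / (2 * γ - ω)) * Real.exp (-(2 * γ) * t) ∧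
      g t ≤ (2 * γ * ω * A / (2 * γ - ω)) * Real.exp (-(2 * γ) * t) := by
  have h2γω : 0 < 2 * γ - ω := by linarith
  set C : ℝ := ω * A / (2 * γ - ω) with hCdef
  have hC0 : 0 ≤ C := div_nonneg (by positivity) h2γω.le
  have hint : IntegrableOn g (Set.Icc 0 T) := hgc.integrableOn_Icc
  have hii : ∀ a ∈ Set.Icc (0:ℝ) T, ∀ b ∈ Set.Icc (0:ℝ) T,
      IntervalIntegrable g volume a b := fun a ha b hb =>
    (hgc.mono (Set.uIcc_subset_Icc ha hb)).intervalIntegrable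
  set G : ℝ → ℝ := fun t => ∫ τ in t..T, g τ with hGdef
  have hTmem : T ∈ Set.Icc (0:ℝ) T := ⟨hT.le, le_refl T⟩
  have h0mem : (0:ℝ) ∈ Set.Icc (0:ℝ) T := ⟨le_refl 0, hT.le⟩
  have hGeq : ∀ t ∈ Set.Icc (0:ℝ) T,
      G t = (∫ τ in (0:ℝ)..T, g τ) - ∫ τ in (0:ℝ)..t, g τ := by
    intro t ht
    rw [hGdef]
    simp only
    rw [intervalIntegral.integral_interval_sub_left (hii 0 h0mem T hTmem)
      (hii 0 h0mem t ht)]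
  have hGcont : ContinuousOn G (Set.Icc 0 T) := by
    have hprim : ContinuousOn (fun t => ∫ τ in (0:ℝ)..t, g τ) (Set.Icc 0 T) := by
      have := intervalIntegral.continuousOn_primitive_interval
        (f := g) (μ := volume) (a := 0) (b := T)
        (by rwa [Set.uIcc_of_le hT.le])
      rwa [Set.uIcc_of_le hT.le] at this
    exact (continuousOn_const.sub hprim).congr hGeq
  -- derivative of G at interior points
  have hGd : ∀ t ∈ Set.Ioo (0:ℝ) T, HasDerivAt G (-(g t)) t := by
    intro t ht
    have hnhds : Set.Icc (0:ℝ) T ∈ nhds t := Icc_mem_nhds ht.1 ht.2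
    have hca : ContinuousAt g t := hgc.continuousAt hnhds
    have hmeas : StronglyMeasurableAtFilter g (nhds t) volume :=
      ⟨Set.Icc 0 T, hnhds, hgc.aestronglyMeasurable measurableSet_Icc⟩
    exact intervalIntegral.integral_hasDerivAt_left
      (hii t (Set.mem_Icc_of_Ioo ht) T hTmem) hmeas hca
  set φ : ℝ → ℝ := fun t => Real.exp (ω * t) * G t - C * Real.exp ((ω - 2 * γ) * t)
    with hφdef
  have hφd : ∀ t ∈ Set.Ioo (0:ℝ) T,
      HasDerivAt φ
        (Real.exp (ω * t) * ω * G t + Real.exp (ω * t) * (-(g t))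
          - C * (Real.exp ((ω - 2 * γ) * t) * (ω - 2 * γ))) t := by
    intro t ht
    have h1 : HasDerivAt (fun t => Real.exp (ω * t)) (Real.exp (ω * t) * ω) t := by
      simpa using ((hasDerivAt_id t).const_mul ω).exp
    have h2 : HasDerivAt (fun t => Real.exp ((ω - 2 * γ) * t))
        (Real.exp ((ω - 2 * γ) * t) * (ω - 2 * γ)) t := by
      simpa using ((hasDerivAt_id t).const_mul (ω - 2 * γ)).exp
    exact (h1.mul (hGd t ht)).sub (h2.const_mul C)
  have hφd_nonneg : ∀ t ∈ Set.Ioo (0:ℝ) T,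
      0 ≤ Real.exp (ω * t) * ω * G t + Real.exp (ω * t) * (-(g t))
          - C * (Real.exp ((ω - 2 * γ) * t) * (ω - 2 * γ)) := by
    intro t ht
    have hineq' : g t ≤ ω * (G t + A * Real.exp (-(2 * γ) * t)) :=
      hineq t (Set.mem_Icc_of_Ioo ht)
    have hexp : Real.exp ((ω - 2 * γ) * t)
        = Real.exp (ω * t) * Real.exp (-(2 * γ) * t) := by
      rw [← Real.exp_add]; ring_nf
    have hCmul : C * (2 * γ - ω) = ω * A := by
      rw [hCdef]; field_simp
    have hexp_pos : 0 < Real.exp (ω * t) := Real.exp_pos _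
    have hmul := mul_le_mul_of_nonneg_left hineq' hexp_pos.le
    have hrw : C * (Real.exp (ω * t) * Real.exp (-(2 * γ) * t) * (ω - 2 * γ))
        = -(ω * A * (Real.exp (ω * t) * Real.exp (-(2 * γ) * t))) := by
      linear_combination (-(Real.exp (ω * t) * Real.exp (-(2 * γ) * t))) * hCmul
    rw [hexp, hrw]
    nlinarith [hmul]
  have hφmono : MonotoneOn φ (Set.Icc 0 T) := by
    apply monotoneOn_of_deriv_nonneg (convex_Icc 0 T)
    · exact ((Real.continuous_exp.comp (continuous_const.mul continuous_id)).continuousOn.mul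
        hGcont).sub (continuous_const.mul
        (Real.continuous_exp.comp (continuous_const.mul continuous_id))).continuousOn
    · intro t ht
      rw [interior_Icc] at ht
      exact ((hφd t ht).differentiableAt).differentiableWithinAt
    · intro t ht
      rw [interior_Icc] at ht
      rw [(hφd t ht).deriv]
      exact hφd_nonneg t ht
  have hGT : G T = 0 := by simp [hGdef]
  intro t ht
  have hφle : φ t ≤ φ T := hφmono ht hTmem ht.2
  have hφT : φ T ≤ 0 := by
    rw [hφdef]; simp only [hGT, mul_zero, zero_sub, neg_nonpos]
    positivity
  have hkey : Real.exp (ω * t) * G t ≤ C * Real.exp ((ω - 2 * γ) * t) := by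
    have := hφle.trans hφT
    rw [hφdef] at this; simp only at this; linarith
  have hexp : Real.exp ((ω - 2 * γ) * t)
      = Real.exp (ω * t) * Real.exp (-(2 * γ) * t) := by
    rw [← Real.exp_add]; ring_nf
  have hexp_pos : 0 < Real.exp (ω * t) := Real.exp_pos _
  have hGle : G t ≤ C * Real.exp (-(2 * γ) * t) := by
    rw [hexp] at hkey
    have := (mul_le_mul_iff_right₀ hexp_pos).mp (by linarith [hkey] : Real.exp (ω * t) * G t ≤ Real.exp (ω * t) * (C * Real.exp (-(2 * γ) * t)))
    exact this
  refine ⟨hGle, ?_⟩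
  have hineq' := hineq t ht
  have hCmul : C * (2 * γ - ω) = ω * A := by
    rw [hCdef]; field_simp
  have h2 : 2 * γ * ω * A / (2 * γ - ω) = ω * (C + A) := by
    rw [hCdef]; field_simp; ring
  rw [h2]
  calc g t ≤ ω * (G t + A * Real.exp (-(2 * γ) * t)) := hineq'
    _ ≤ ω * (C * Real.exp (-(2 * γ) * t) + A * Real.exp (-(2 * γ) * t)) := by
        apply mul_le_mul_of_nonneg_left _ hω.le
        linarith
    _ = ω * (C + A) * Real.exp (-(2 * γ) * t) := by ring
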